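/- Lemma (Section 3.3, first lemma): Let n ≥ 1 and let π, τ, ξ, η be permutations of {1,…,n} such that the words w_n[π,τ] and w_n[ξ,η] are distinct. Then the monoid S(w_n[ξ,η]) satisfies the identity w_n[π,τ] ≈ w_n'[π,τ]. -/

import Mathlib

/-! Common definitions: words, fully invariant congruences, identities and
named varieties from the paper. -/

/-- The free monoid over the countably infinite alphabet `ℕ`. -/
abbrev FM : Type := FreeMonoid ℕ

/-- The letters `x, y, z, s, t, h` (pairwise distinct elements of `ℕ`). -/
def xL : FM := FreeMonoid.of 0
def yL : FM := FreeMonoid.of 1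
def zL : FM := FreeMonoid.of 2
def sL : FM := FreeMonoid.of 3
def tL : FM := FreeMonoid.of 4
def hL : FM := FreeMonoid.of 5
/-- The indexed letters `z_i` and `t_i` (0-based; pairwise distinct, and distinct
from the named letters above). -/
def zV (i : ℕ) : FM := FreeMonoid.of (10 + 2 * i)
def tV (i : ℕ) : FM := FreeMonoid.of (11 + 2 * i)

/-- A congruence on the free monoid is fully invariant if it is stable under all
monoid endomorphisms. -/
def IsFullyInvariant (θ : Con FM) : Prop :=
  ∀ (σ : FM →* FM) (u v : FM), θ u v → θ (σ u) (σ v)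

/-- The smallest fully invariant congruence on `FM` containing a set of identities. -/
def fiCon (E : Set (FM × FM)) : Con FM :=
  sInf {c : Con FM | IsFullyInvariant c ∧ ∀ p ∈ E, c p.1 p.2}

/-- Two congruences (relations) permute: `α ∘ β = β ∘ α`. -/
def Permute (α β : Con FM) : Prop :=
  Relation.Comp (⇑α) (⇑β) = Relation.Comp (⇑β) (⇑α)

/-- A monoid `M` satisfies the identity `p.1 ≈ p.2`. -/
def MSatisfies (M : Type*) [Monoid M] (p : FM × FM) : Prop :=
  ∀ φ : FM →* M, φ p.1 = φ p.2

/-- A monoid `M` satisfies all identities of a congruence `θ`. -/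
def SatisfiesAll (θ : Con FM) (M : Type*) [Monoid M] : Prop :=
  ∀ u v : FM, θ u v → MSatisfies M (u, v)

/-- Every element of the monoid `M` has a two-sided inverse, i.e. `M` is a group. -/
def IsGroupMonoid (M : Type*) [Monoid M] : Prop :=
  ∀ m : M, ∃ m' : M, m * m' = 1 ∧ m' * m = 1

/-- The dual of a congruence: `θ^δ = {(rev u, rev v) : (u, v) ∈ θ}`. -/
def dualCon (θ : Con FM) : Con FM where
  r a b := θ a.reverse b.reverse
  iseqv := ⟨fun _ => θ.refl _, fun h => θ.symm h, fun h h' => θ.trans h h'⟩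
  mul' := fun {a b c d} h₁ h₂ => by
    show θ (a * c).reverse (b * d).reverse
    rw [FreeMonoid.reverse_mul, FreeMonoid.reverse_mul]
    exact θ.mul h₂ h₁

/-- σ1 : `xysxty ≈ yxsxty`. -/
def idσ1 : FM × FM := (xL*yL*sL*xL*tL*yL, yL*xL*sL*xL*tL*yL)
/-- σ2 : `xsytxy ≈ xsytyx`. -/
def idσ2 : FM × FM := (xL*sL*yL*tL*xL*yL, xL*sL*yL*tL*yL*xL)
/-- σ3 : `xsxyty ≈ xsyxty`. -/
def idσ3 : FM × FM := (xL*sL*xL*yL*tL*yL, xL*sL*yL*xL*tL*yL)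
/-- α1 : `xysxtxhy ≈ yxsxtxhy`. -/
def idα1 : FM × FM := (xL*yL*sL*xL*tL*xL*hL*yL, yL*xL*sL*xL*tL*xL*hL*yL)
/-- α2 : `xysxtyhx ≈ yxsxtyhx`. -/
def idα2 : FM × FM := (xL*yL*sL*xL*tL*yL*hL*xL, yL*xL*sL*xL*tL*yL*hL*xL)
/-- α3 : `xysytxhx ≈ yxsytxhx`. -/
def idα3 : FM × FM := (xL*yL*sL*yL*tL*xL*hL*xL, yL*xL*sL*yL*tL*xL*hL*xL)

/-- `aIdent i` is the identity `α_i` for `i ∈ {1, 2, 3}`. -/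
def aIdent (i : ℕ) : FM × FM := if i = 1 then idα1 else if i = 2 then idα2 else idα3
/-- `bIdent i` is `β_i`, obtained from `α_i` by reversing both sides. -/
def bIdent (i : ℕ) : FM × FM := ((aIdent i).1.reverse, (aIdent i).2.reverse)

/-- The ordered product `f 0 * f 1 * ⋯ * f (n-1)`. -/
def prodRange (n : ℕ) (f : ℕ → FM) : FM := ((List.range n).map f).prod
/-- The ordered product `f 0 * f 1 * ⋯ * f (n-1)` over `Fin n`. -/
def prodFin (n : ℕ) (f : Fin n → FM) : FM := ((List.finRange n).map f).prod

/-- The word `w_n[π,τ]` (0-based indices). -/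
def wWord (n : ℕ) (π τ : Equiv.Perm (Fin n)) : FM :=
  prodRange n (fun i => zV i * tV i) * xL *
    prodFin n (fun i => zV (π i) * zV (n + τ i)) * xL *
    prodRange n (fun i => tV (n + i) * zV (n + i))

/-- The word `w_n'[π,τ]`. -/
def wWord' (n : ℕ) (π τ : Equiv.Perm (Fin n)) : FM :=
  prodRange n (fun i => zV i * tV i) * (xL * xL) *
    prodFin n (fun i => zV (π i) * zV (n + τ i)) *
    prodRange n (fun i => tV (n + i) * zV (n + i))

/-- The word `c_{n,m}[ρ]`. -/
def cWord (n m : ℕ) (ρ : Equiv.Perm (Fin (n + m))) : FM :=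
  prodRange n (fun i => zV i * tV i) * (xL * yL) * tL *
    prodRange m (fun i => zV (n + i) * tV (n + i)) * xL *
    prodFin (n + m) (fun i => zV (ρ i)) * yL

/-- The word `c'_{n,m}[ρ]`. -/
def cWord' (n m : ℕ) (ρ : Equiv.Perm (Fin (n + m))) : FM :=
  prodRange n (fun i => zV i * tV i) * (yL * xL) * tL *
    prodRange m (fun i => zV (n + i) * tV (n + i)) * xL *
    prodFin (n + m) (fun i => zV (ρ i)) * yL

/-- The word `c_{n,m,k}[ρ]`. -/
def cWord3 (n m k : ℕ) (ρ : Equiv.Perm (Fin (n + m + k))) : FM :=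
  prodRange n (fun i => zV i * tV i) * (xL * yL) * tL *
    prodRange m (fun i => zV (n + i) * tV (n + i)) * xL *
    prodFin (n + m + k) (fun i => zV (ρ i)) * yL *
    prodRange k (fun i => tV (n + m + i) * zV (n + m + i))

/-- The word `c'_{n,m,k}[ρ]`. -/
def cWord3' (n m k : ℕ) (ρ : Equiv.Perm (Fin (n + m + k))) : FM :=
  prodRange n (fun i => zV i * tV i) * (yL * xL) * tL *
    prodRange m (fun i => zV (n + i) * tV (n + i)) * xL *
    prodFin (n + m + k) (fun i => zV (ρ i)) * yL *
    prodRange k (fun i => tV (n + m + i) * zV (n + m + i))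

/-- The equational theory of `D_∞`. -/
def θDinf : Con FM :=
  fiCon {(xL^2, xL^3), (xL^2 * yL, yL * xL^2), idσ1, idσ2, idσ3}
/-- The equational theory of `N`. -/
def θN : Con FM :=
  fiCon {(xL^2, xL^3), (xL^2 * yL, yL * xL^2), (xL*yL*xL*zL*xL, xL^2*yL*zL), idσ2, idσ3}
/-- The equational theory of `K`. -/
def θK : Con FM :=
  fiCon {(xL^2*yL, xL^2*yL*xL), (xL*yL*xL, xL*yL*xL^2), (xL^2*yL^2, yL^2*xL^2)}
/-- The identity basis of `P_n`. -/
def basisP (n : ℕ) : Set (FM × FM) :=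
  {(xL^n, xL^(n+1)), (xL^n * yL, yL * xL^n), (xL^2*yL, xL*yL*xL)}
/-- The equational theory of `P_n`. -/
def θP (n : ℕ) : Con FM := fiCon (basisP n)
/-- The equational theory of `R`. -/
def θR : Con FM :=
  fiCon ({(xL^2, xL^3), (xL^2*yL, yL*xL^2), idσ1, idσ2} ∪
    {p : FM × FM | ∃ (n : ℕ) (π τ : Equiv.Perm (Fin n)),
        1 ≤ n ∧ p = (wWord n π τ, wWord' n π τ)})
/-- The equational theory of `Q_{r,s}`. -/
def θQ (r s : ℕ) : Con FM :=
  fiCon ({(xL^2, xL^3), (xL^2*yL, yL*xL^2), idσ3} ∪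
    {p : FM × FM | ∃ i : ℕ, (i = 1 ∨ i = 2 ∨ i = 3) ∧ i ≠ r ∧ p = aIdent i} ∪
    {p : FM × FM | ∃ j : ℕ, (j = 1 ∨ j = 2 ∨ j = 3) ∧ j ≠ s ∧ p = bIdent j} ∪
    {p : FM × FM | ∃ (n m : ℕ) (ρ : Equiv.Perm (Fin (n + m))),
        p = (cWord n m ρ, cWord' n m ρ) ∨
        p = ((cWord n m ρ).reverse, (cWord' n m ρ).reverse)})
/-- The equational theory of the variety `SL` of semilattice monoids. -/
def θSL : Con FM := fiCon {(xL, xL^2), (xL*yL, yL*xL)}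

/-- `u` is a factor (contiguous subword) of `w`. -/
def IsFactor (u w : FM) : Prop := ∃ p q : FM, p * u * q = w

lemma isFactor_left {a b w : FM} (h : IsFactor (a * b) w) : IsFactor a w := by
  obtain ⟨p, q, hpq⟩ := h
  exact ⟨p, b * q, by rw [← hpq]; simp [mul_assoc]⟩

lemma isFactor_right {a b w : FM} (h : IsFactor (a * b) w) : IsFactor b w := by
  obtain ⟨p, q, hpq⟩ := h
  exact ⟨p * a, q, by rw [← hpq]; simp [mul_assoc]⟩

/-- The Rees congruence associated with the ideal of non-factors of `w`. -/
def reesCon (w : FM) : Con FM where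
  r u v := u = v ∨ (¬ IsFactor u w ∧ ¬ IsFactor v w)
  iseqv := by
    refine ⟨fun _ => Or.inl rfl, ?_, ?_⟩
    · intro a b h
      rcases h with rfl | ⟨h1, h2⟩
      · exact Or.inl rfl
      · exact Or.inr ⟨h2, h1⟩
    · intro a b c h h'
      rcases h with rfl | ⟨h1, h2⟩
      · exact h'
      · rcases h' with rfl | ⟨h3, h4⟩
        · exact Or.inr ⟨h1, h2⟩
        · exact Or.inr ⟨h1, h4⟩
  mul' := by
    rintro a b c d (rfl | ⟨h1, h2⟩) (rfl | ⟨h3, h4⟩)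
    · exact Or.inl rfl
    · exact Or.inr ⟨fun h => h3 (isFactor_right h), fun h => h4 (isFactor_right h)⟩
    · exact Or.inr ⟨fun h => h1 (isFactor_left h), fun h => h2 (isFactor_left h)⟩
    · exact Or.inr ⟨fun h => h1 (isFactor_left h), fun h => h2 (isFactor_left h)⟩

/-- The Rees quotient monoid `S(w)`. -/
abbrev SMon (w : FM) : Type := (reesCon w).Quotient

/-- The number of occurrences of the letter `a` in the word `w`. -/
def occ (w : FM) (a : ℕ) : ℕ := (FreeMonoid.toList w).count a

/-- A word in which every letter occurs at most once. -/
def LinearW (w : FM) : Prop := ∀ a : ℕ, occ w a ≤ 1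

/-- Assemble the word `b0 * t_1 * b_1 * ⋯ * t_m * b_m` from a first block and a list
of (simple letter, block) pairs. -/
def assemble (b0 : FM) (rest : List (ℕ × FM)) : FM :=
  b0 * (rest.map (fun p => FreeMonoid.of p.1 * p.2)).prod

/-- `(b0, rest)` is the decomposition of `w` into alternating simple letters and blocks
consisting of multiple letters. -/
def IsDecomposition (w : FM) (b0 : FM) (rest : List (ℕ × FM)) : Prop :=
  w = assemble b0 rest ∧
  (∀ p ∈ rest, occ w p.1 = 1) ∧
  (∀ a ∈ FreeMonoid.toList b0, 2 ≤ occ w a) ∧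
  (∀ p ∈ rest, ∀ a ∈ FreeMonoid.toList p.2, 2 ≤ occ w a)

/-- The identity `u ≈ v` is linear-balanced. -/
def LinearBalanced (u v : FM) : Prop :=
  ∃ (b0 c0 : FM) (urest vrest : List (ℕ × FM)),
    IsDecomposition u b0 urest ∧ IsDecomposition v c0 vrest ∧
    urest.map Prod.fst = vrest.map Prod.fst ∧
    ∀ a : ℕ, (2 ≤ occ u a ∨ 2 ≤ occ v a) →
      occ b0 a = occ c0 a ∧ occ b0 a ≤ 1 ∧
      ∀ q ∈ urest.zip vrest, occ q.1.2 a = occ q.2.2 a ∧ occ q.1.2 a ≤ 1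

/-- `w` is an isoterm for `θ`. -/
def IsIsoterm (θ : Con FM) (w : FM) : Prop := ∀ w' : FM, θ w w' → w' = w


namespace SWaux

lemma le_count_bind (l : List ℕ) (g : ℕ → List ℕ) (c a : ℕ) :
    l.count c * ((g c).count a) ≤ ((l.flatMap g).count a) := by
  induction l with
  | nil => simp
  | cons b l ih =>
    rw [List.flatMap_cons, List.count_append, List.count_cons]
    by_cases hbc : (b == c) = true
    · rw [if_pos hbc]
      have hb : b = c := by simpa using hbc
      subst hb
      have : (l.count b + 1) * (g b).count a = l.count b * (g b).count a + (g b).count a := by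
        ring
      omega
    · rw [if_neg hbc, Nat.add_zero]
      omega

lemma le_count_bind₂ (l : List ℕ) (g : ℕ → List ℕ) {c₁ c₂ : ℕ} (h : c₁ ≠ c₂) (a : ℕ) :
    l.count c₁ * ((g c₁).count a) + l.count c₂ * ((g c₂).count a) ≤ ((l.flatMap g).count a) := by
  induction l with
  | nil => simp
  | cons b l ih =>
    rw [List.flatMap_cons, List.count_append, List.count_cons, List.count_cons]
    by_cases h1 : (b == c₁) = true
    · have hb : b = c₁ := by simpa using h1
      subst hb
      rw [if_pos h1, if_neg (by simpa using h)]; simp only [Nat.add_zero]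
      have : (l.count b + 1) * (g b).count a = l.count b * (g b).count a + (g b).count a := by
        ring
      omega
    · by_cases h2 : (b == c₂) = true
      · have hb : b = c₂ := by simpa using h2
        subst hb
        rw [if_neg h1, if_pos h2, Nat.add_zero]
        have : (l.count b + 1) * (g b).count a = l.count b * (g b).count a + (g b).count a := by
          ring
        omega
      · rw [if_neg h1, if_neg h2, Nat.add_zero, Nat.add_zero]
        omega

/-- splitting an infix of an append -/
lemma infix_append_split {u l₁ l₂ : List ℕ} (h : u <:+: l₁ ++ l₂) :
    u <:+: l₁ ∨ u <:+: l₂ ∨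
      ∃ s p, u = s ++ p ∧ s <:+ l₁ ∧ p <+: l₂ ∧ s ≠ [] ∧ p ≠ [] := by
  obtain ⟨p, q, hpq⟩ := h
  rw [List.append_assoc] at hpq
  rcases List.append_eq_append_iff.mp hpq with ⟨a, ha1, ha2⟩ | ⟨c, hc1, hc2⟩
  · -- l₁ = p ++ a, u ++ q = a ++ l₂
    rcases List.append_eq_append_iff.mp ha2 with ⟨b, hb1, hb2⟩ | ⟨d, hd1, hd2⟩
    · -- a = u ++ b : u prefix of a, a suffix of l₁
      left
      exact ⟨p, b, by rw [ha1, hb1, List.append_assoc]⟩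
    · -- u = a ++ d, l₂ = d ++ q
      rcases eq_or_ne a [] with rfl | hane
      · right; left; exact ⟨[], q, by simp [hd1, hd2.symm]⟩
      rcases eq_or_ne d [] with rfl | hdne
      · left; exact ⟨p, [], by simp [ha1, hd1]⟩
      · right; right
        exact ⟨a, d, hd1, ⟨p, ha1.symm⟩, ⟨q, hd2.symm⟩, hane, hdne⟩
  · -- p = l₁ ++ c, l₂ = c ++ u ++ q
    right; left; exact ⟨c, q, by rw [hc2, List.append_assoc]⟩

lemma eq_append_cons_split {x : ℕ} : ∀ {l₁ m₁ l₂ m₂ : List ℕ}, l₁ ++ x :: l₂ = m₁ ++ x :: m₂ →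
    x ∉ l₁ → x ∉ m₁ → l₁ = m₁ ∧ l₂ = m₂ := by
  intro l₁
  induction l₁ with
  | nil =>
    intro m₁ l₂ m₂ h h1 h2
    cases m₁ with
    | nil => simpa using h
    | cons b m₁ =>
      simp only [List.nil_append, List.cons_append, List.cons.injEq] at h
      exact absurd (h.1 ▸ (List.mem_cons_self : b ∈ b :: m₁)) h2
  | cons a l₁ ih =>
    intro m₁ l₂ m₂ h h1 h2
    cases m₁ with
    | nil =>
      simp only [List.cons_append, List.nil_append, List.cons.injEq] at h
      exact absurd (h.1 ▸ (List.mem_cons_self : a ∈ a :: l₁)) h1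
    | cons b m₁ =>
      simp only [List.cons_append, List.cons.injEq] at h
      obtain ⟨rfl, h⟩ := h
      have := ih h (fun hx => h1 (List.mem_cons_of_mem _ hx)) (fun hx => h2 (List.mem_cons_of_mem _ hx))
      exact ⟨by rw [this.1], this.2⟩

lemma suffix_eq_of_head {s l : List ℕ} {a : ℕ} (h : s <:+ a :: l) (ha : a ∈ s) (hl : a ∉ l) :
    s = a :: l := by
  rcases List.suffix_cons_iff.mp h with rfl | h'
  · rfl
  · exact absurd (h'.subset ha) hl

lemma prefix_eq_of_last {p l : List ℕ} {a : ℕ} (h : p <+: l ++ [a]) (ha : a ∈ p) (hl : a ∉ l) :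
    p = l ++ [a] := by
  obtain ⟨r, hr⟩ := h
  rcases List.eq_nil_or_concat r with rfl | ⟨r', b, rfl⟩
  · simpa using hr
  · rw [List.concat_eq_append, ← List.append_assoc] at hr
    have hlen : (p ++ r').length = l.length := by
      have := congrArg List.length hr
      simp only [List.length_append, List.length_cons, List.length_singleton] at this
      simp only [List.length_append]
      omega
    obtain ⟨h1, _⟩ := List.append_inj hr (by simpa using hlen)
    exact absurd (h1 ▸ (List.mem_append_left r' ha)) hl

lemma chain'_of_infix {R : ℕ → ℕ → Prop} {u l : List ℕ} (h : u <:+: l) (hc : l.Chain' R) :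
    u.Chain' R := by
  obtain ⟨p, q, rfl⟩ := h
  exact ((List.isChain_append.mp ((List.isChain_append.mp hc).1)).2).1

lemma length_le_one_of_chain' {R : ℕ → ℕ → Prop} {u l : List ℕ} (h : u <:+: l)
    (hc : l.Chain' R) (hno : ∀ a b, a ∈ u → b ∈ u → ¬ R a b) : u.length ≤ 1 := by
  match u, h with
  | [], _ => simp
  | [a], _ => simp
  | (a :: b :: v), h =>
    have := chain'_of_infix h hc
    replace this := List.isChain_cons_cons.mp this
    exact absurd this.1 (hno a b (by simp) (by simp))

lemma infix_bind_of_mem {l : List ℕ} {i : ℕ} (h : i ∈ l) (f : ℕ → List ℕ) :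
    f i <:+: l.flatMap f := by
  obtain ⟨s, t, rfl⟩ := List.append_of_mem h
  refine ⟨s.flatMap f, t.flatMap f, ?_⟩
  simp [List.flatMap_append, List.flatMap_cons]

/-! ### Word structure at the list level -/

def zc (j : ℕ) : ℕ := 10 + 2 * j
def tc (j : ℕ) : ℕ := 11 + 2 * j

def LA (n : ℕ) : List ℕ := (List.range n).flatMap fun i => [zc i, tc i]
def LB (n : ℕ) (ξ η : Equiv.Perm (Fin n)) : List ℕ :=
  (List.finRange n).flatMap fun i => [zc (ξ i), zc (n + (η i : ℕ))]
def LC (n : ℕ) : List ℕ := (List.range n).flatMap fun i => [tc (n + i), zc (n + i)]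
def LW (n : ℕ) (ξ η : Equiv.Perm (Fin n)) : List ℕ :=
  LA n ++ 0 :: (LB n ξ η ++ 0 :: LC n)
def LV (n : ℕ) (π τ : Equiv.Perm (Fin n)) : List ℕ :=
  LA n ++ 0 :: 0 :: (LB n π τ ++ LC n)

lemma count_pair (a b c : ℕ) :
    List.count c [a, b] = (if a = c then 1 else 0) + (if b = c then 1 else 0) := by
  simp only [List.count_cons, List.count_nil, beq_iff_eq]
  omega

lemma sum_list_range (n : ℕ) (f : ℕ → ℕ) :
    ((List.range n).map f).sum = ∑ i ∈ Finset.range n, f i := rfl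

lemma sum_finRange (n : ℕ) (f : Fin n → ℕ) :
    ((List.finRange n).map f).sum = ∑ i : Fin n, f i := (Fin.sum_univ_def f).symm

lemma count_LA (a : ℕ) (n : ℕ) :
    (LA n).count a = ∑ i ∈ Finset.range n, ((if zc i = a then 1 else 0) + (if tc i = a then 1 else 0)) := by
  rw [LA, List.count_flatMap, ← sum_list_range]
  congr 1
  apply List.map_congr_left
  intro i _
  exact count_pair _ _ _

lemma count_LC (a : ℕ) (n : ℕ) :
    (LC n).count a = ∑ i ∈ Finset.range n, ((if tc (n+i) = a then 1 else 0) + (if zc (n+i) = a then 1 else 0)) := by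
  rw [LC, List.count_flatMap, ← sum_list_range]
  congr 1
  apply List.map_congr_left
  intro i _
  exact count_pair _ _ _

lemma count_LB (a : ℕ) (n : ℕ) (ξ η : Equiv.Perm (Fin n)) :
    (LB n ξ η).count a = ∑ i : Fin n, ((if zc (ξ i) = a then 1 else 0) + (if zc (n + (η i : ℕ)) = a then 1 else 0)) := by
  rw [LB, List.count_flatMap, ← sum_finRange]
  congr 1
  apply List.map_congr_left
  intro i _
  exact count_pair _ _ _

lemma zc_inj {i j : ℕ} : zc i = zc j ↔ i = j := by simp only [zc]; omega
lemma tc_inj {i j : ℕ} : tc i = tc j ↔ i = j := by simp only [tc]; omega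
lemma zc_ne_tc {i j : ℕ} : ¬ (zc i = tc j) := by simp only [zc, tc]; omega
lemma tc_ne_zc {i j : ℕ} : ¬ (tc i = zc j) := by simp only [zc, tc]; omega
lemma zc_ne_x {i : ℕ} : ¬ (zc i = 0) := by simp only [zc]; omega
lemma tc_ne_x {i : ℕ} : ¬ (tc i = 0) := by simp only [tc]; omega

lemma czA {j n : ℕ} : (LA n).count (zc j) = if j < n then 1 else 0 := by
  rw [count_LA]
  have h : ∀ i ∈ Finset.range n,
      ((if zc i = zc j then 1 else 0) + (if tc i = zc j then 1 else 0) : ℕ)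
      = if i = j then 1 else 0 := by
    intro i _
    simp only [zc_inj, if_neg (@tc_ne_zc i j), Nat.add_zero]
  rw [Finset.sum_congr rfl h, Finset.sum_ite_eq' (Finset.range n) j (fun _ => 1)]
  simp [Finset.mem_range]

lemma ctA {j n : ℕ} : (LA n).count (tc j) = if j < n then 1 else 0 := by
  rw [count_LA]
  have h : ∀ i ∈ Finset.range n,
      ((if zc i = tc j then 1 else 0) + (if tc i = tc j then 1 else 0) : ℕ)
      = if i = j then 1 else 0 := by
    intro i _
    simp only [tc_inj, if_neg (@zc_ne_tc i j), Nat.zero_add]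
  rw [Finset.sum_congr rfl h, Finset.sum_ite_eq' (Finset.range n) j (fun _ => 1)]
  simp [Finset.mem_range]

lemma cxA {n : ℕ} : (LA n).count 0 = 0 := by
  rw [count_LA]
  apply Finset.sum_eq_zero
  intro i _
  simp only [if_neg (@zc_ne_x i), if_neg (@tc_ne_x i)]
  rfl

lemma czC {j n : ℕ} : (LC n).count (zc j) = if n ≤ j ∧ j < 2*n then 1 else 0 := by
  rw [count_LC]
  by_cases hj : n ≤ j ∧ j < 2*n
  · have h : ∀ i ∈ Finset.range n,
        ((if tc (n+i) = zc j then 1 else 0) + (if zc (n+i) = zc j then 1 else 0) : ℕ)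
        = if i = j - n then 1 else 0 := by
      intro i _
      have : zc (n+i) = zc j ↔ i = j - n := by simp only [zc]; omega
      simp only [this, if_neg (@tc_ne_zc (n+i) j), Nat.zero_add]
    rw [Finset.sum_congr rfl h, Finset.sum_ite_eq' (Finset.range n) (j-n) (fun _ => 1)]
    rw [if_pos hj, if_pos (Finset.mem_range.mpr (by omega))]
  · rw [if_neg hj]
    apply Finset.sum_eq_zero
    intro i hi
    have hi' := Finset.mem_range.mp hi
    have h1 : ¬ (zc (n+i) = zc j) := by simp only [zc]; omega
    simp only [if_neg (@tc_ne_zc (n+i) j), if_neg h1]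
    rfl

lemma ctC {j n : ℕ} : (LC n).count (tc j) = if n ≤ j ∧ j < 2*n then 1 else 0 := by
  rw [count_LC]
  by_cases hj : n ≤ j ∧ j < 2*n
  · have h : ∀ i ∈ Finset.range n,
        ((if tc (n+i) = tc j then 1 else 0) + (if zc (n+i) = tc j then 1 else 0) : ℕ)
        = if i = j - n then 1 else 0 := by
      intro i _
      have : tc (n+i) = tc j ↔ i = j - n := by simp only [tc]; omega
      simp only [this, if_neg (@zc_ne_tc (n+i) j), Nat.add_zero]
    rw [Finset.sum_congr rfl h, Finset.sum_ite_eq' (Finset.range n) (j-n) (fun _ => 1)]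
    rw [if_pos hj, if_pos (Finset.mem_range.mpr (by omega))]
  · rw [if_neg hj]
    apply Finset.sum_eq_zero
    intro i hi
    have hi' := Finset.mem_range.mp hi
    have h1 : ¬ (tc (n+i) = tc j) := by simp only [tc]; omega
    simp only [if_neg (@zc_ne_tc (n+i) j), if_neg h1]
    rfl

lemma cxC {n : ℕ} : (LC n).count 0 = 0 := by
  rw [count_LC]
  apply Finset.sum_eq_zero
  intro i _
  simp only [if_neg (@zc_ne_x (n+i)), if_neg (@tc_ne_x (n+i))]
  rfl

lemma czB_lo {j n : ℕ} (hj : j < n) (ξ η : Equiv.Perm (Fin n)) :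
    (LB n ξ η).count (zc j) = 1 := by
  rw [count_LB]
  have h : ∀ i : Fin n,
      ((if zc (ξ i) = zc j then 1 else 0) + (if zc (n + (η i : ℕ)) = zc j then 1 else 0) : ℕ)
      = if i = ξ.symm ⟨j, hj⟩ then 1 else 0 := by
    intro i
    have h2 : ¬ (zc (n + (η i : ℕ)) = zc j) := by simp only [zc]; omega
    have h1 : zc (ξ i) = zc j ↔ i = ξ.symm ⟨j, hj⟩ := by
      rw [show (zc (ξ i) = zc j) ↔ (ξ i = ⟨j, hj⟩) by
        rw [zc_inj]; exact ⟨fun hh => Fin.ext hh, fun hh => congrArg _ hh⟩]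
      exact Equiv.apply_eq_iff_eq_symm_apply ξ
    simp only [h1, if_neg h2, Nat.add_zero]
  rw [Fintype.sum_congr _ _ h, Finset.sum_ite_eq' Finset.univ (ξ.symm ⟨j, hj⟩) (fun _ => 1)]
  simp

lemma czB_hi {j n : ℕ} (hj1 : n ≤ j) (hj2 : j < 2*n) (ξ η : Equiv.Perm (Fin n)) :
    (LB n ξ η).count (zc j) = 1 := by
  have hjn : j - n < n := by omega
  rw [count_LB]
  have h : ∀ i : Fin n,
      ((if zc (ξ i) = zc j then 1 else 0) + (if zc (n + (η i : ℕ)) = zc j then 1 else 0) : ℕ)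
      = if i = η.symm ⟨j - n, hjn⟩ then 1 else 0 := by
    intro i
    have h1 : ¬ (zc (ξ i) = zc j) := by
      have := (ξ i).isLt
      simp only [zc]; omega
    have h2 : zc (n + (η i : ℕ)) = zc j ↔ i = η.symm ⟨j - n, hjn⟩ := by
      rw [show (zc (n + (η i : ℕ)) = zc j) ↔ (η i = ⟨j - n, hjn⟩) by
        rw [zc_inj, Fin.ext_iff]
        show n + (η i : ℕ) = j ↔ (η i : ℕ) = j - n
        omega]
      exact Equiv.apply_eq_iff_eq_symm_apply η
    simp only [h2, if_neg h1, Nat.zero_add]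
  rw [Fintype.sum_congr _ _ h, Finset.sum_ite_eq' Finset.univ (η.symm ⟨j - n, hjn⟩) (fun _ => 1)]
  simp

lemma memLB {a n : ℕ} {ξ η : Equiv.Perm (Fin n)} (h : a ∈ LB n ξ η) :
    ∃ k, k < 2*n ∧ a = zc k := by
  rw [LB, List.mem_flatMap] at h
  obtain ⟨i, _, hi⟩ := h
  simp only [List.mem_cons, List.mem_singleton, List.not_mem_nil, or_false] at hi
  rcases hi with rfl | rfl
  · exact ⟨ξ i, by have := (ξ i).isLt; omega, rfl⟩
  · exact ⟨n + (η i : ℕ), by have := (η i).isLt; omega, rfl⟩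

lemma cxB {n : ℕ} {ξ η : Equiv.Perm (Fin n)} : (LB n ξ η).count 0 = 0 := by
  rw [List.count_eq_zero]
  intro h
  obtain ⟨k, _, hk⟩ := memLB h
  simp [zc] at hk
  omega

lemma ctB {j n : ℕ} {ξ η : Equiv.Perm (Fin n)} : (LB n ξ η).count (tc j) = 0 := by
  rw [List.count_eq_zero]
  intro h
  obtain ⟨k, _, hk⟩ := memLB h
  simp [zc, tc] at hk
  omega

lemma cB_le_one {n : ℕ} {ξ η : Equiv.Perm (Fin n)} (a : ℕ) : (LB n ξ η).count a ≤ 1 := by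
  by_cases h : a ∈ LB n ξ η
  · obtain ⟨k, hk, rfl⟩ := memLB h
    by_cases hk2 : k < n
    · rw [czB_lo hk2]
    · rw [czB_hi (by omega) hk]
  · rw [List.count_eq_zero.mpr h]
    omega

lemma memLA {a n : ℕ} (h : a ∈ LA n) : ∃ j, j < n ∧ (a = zc j ∨ a = tc j) := by
  rw [LA, List.mem_flatMap] at h
  obtain ⟨i, hi, hmem⟩ := h
  simp only [List.mem_cons, List.mem_singleton, List.not_mem_nil, or_false] at hmem
  exact ⟨i, List.mem_range.mp hi, hmem⟩

lemma memLC {a n : ℕ} (h : a ∈ LC n) : ∃ k, n ≤ k ∧ k < 2*n ∧ (a = tc k ∨ a = zc k) := by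
  rw [LC, List.mem_flatMap] at h
  obtain ⟨i, hi, hmem⟩ := h
  simp only [List.mem_cons, List.mem_singleton, List.not_mem_nil, or_false] at hmem
  exact ⟨n + i, by omega, by have := List.mem_range.mp hi; omega, hmem⟩

/-- counts in the whole word -/
lemma cxW {n : ℕ} {ξ η : Equiv.Perm (Fin n)} : (LW n ξ η).count 0 = 2 := by
  simp only [LW, List.count_append, List.count_cons, beq_iff_eq, if_pos rfl,
    @cxA n, @cxB n ξ η, @cxC n]
  simp

lemma czW {k n : ℕ} (hk : k < 2*n) {ξ η : Equiv.Perm (Fin n)} :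
    (LW n ξ η).count (zc k) = 2 := by
  have hB : (LB n ξ η).count (zc k) = 1 := by
    by_cases h : k < n
    · exact czB_lo h ξ η
    · exact czB_hi (by omega) hk ξ η
  simp only [LW, List.count_append, List.count_cons, beq_iff_eq,
    if_neg (fun hh : (0:ℕ) = zc k => zc_ne_x hh.symm), @czA k n, @czC k n, hB]
  split_ifs <;> omega

lemma ctW {j n : ℕ} {ξ η : Equiv.Perm (Fin n)} : (LW n ξ η).count (tc j) ≤ 1 := by
  simp only [LW, List.count_append, List.count_cons, beq_iff_eq,
    if_neg (fun hh : (0:ℕ) = tc j => tc_ne_x hh.symm), @ctA j n, @ctB j n ξ η, @ctC j n]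
  split_ifs <;> omega

lemma memLW {a n : ℕ} {ξ η : Equiv.Perm (Fin n)} (h : a ∈ LW n ξ η) :
    a = 0 ∨ (∃ j, j < 2*n ∧ a = zc j) ∨ (∃ j, j < 2*n ∧ a = tc j) := by
  simp only [LW, List.mem_append, List.mem_cons] at h
  rcases h with h | h | h
  · obtain ⟨j, hj, hh⟩ := memLA h
    rcases hh with rfl | rfl
    · exact Or.inr (Or.inl ⟨j, by omega, rfl⟩)
    · exact Or.inr (Or.inr ⟨j, by omega, rfl⟩)
  · exact Or.inl h
  · rcases h with h | h | h
    · obtain ⟨k, _, hk⟩ := memLB h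
      exact Or.inr (Or.inl ⟨k, by omega, hk⟩)
    · exact Or.inl h
    · obtain ⟨k, _, hk2, hh⟩ := memLC h
      rcases hh with rfl | rfl
      · exact Or.inr (Or.inr ⟨k, by omega, rfl⟩)
      · exact Or.inr (Or.inl ⟨k, by omega, rfl⟩)

lemma doubles {a n : ℕ} {ξ η : Equiv.Perm (Fin n)} (h : 2 ≤ (LW n ξ η).count a) :
    a = 0 ∨ ∃ j, j < 2*n ∧ a = zc j := by
  have hmem : a ∈ LW n ξ η := List.count_pos_iff.mp (by omega)
  rcases memLW hmem with h1 | h1 | ⟨j, _, rfl⟩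
  · exact Or.inl h1
  · exact Or.inr h1
  · exact absurd h (by have := @ctW j n ξ η; omega)

lemma len_LB {n : ℕ} {ξ η : Equiv.Perm (Fin n)} : (LB n ξ η).length = 2*n := by
  rw [LB, List.length_flatMap]
  rw [show (List.map (fun i : Fin n => [zc (ξ i), zc (n + (η i : ℕ))].length) (List.finRange n))
      = List.map (fun _ => 2) (List.finRange n) from List.map_congr_left (fun i _ => rfl)]
  rw [List.map_const', List.sum_replicate, List.length_finRange, smul_eq_mul]
  omega
/-! ### toList lemmas -/

lemma toList_listProd : ∀ l : List FM, FreeMonoid.toList l.prod = l.flatMap FreeMonoid.toList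
  | [] => by simp
  | a :: l => by
    rw [List.prod_cons, FreeMonoid.toList_mul, toList_listProd l, List.flatMap_cons]

lemma toList_prodRange (n : ℕ) (f : ℕ → FM) :
    FreeMonoid.toList (prodRange n f) = (List.range n).flatMap (fun i => FreeMonoid.toList (f i)) := by
  rw [prodRange, toList_listProd, List.flatMap_map]

lemma toList_prodFin (n : ℕ) (f : Fin n → FM) :
    FreeMonoid.toList (prodFin n f) = (List.finRange n).flatMap (fun i => FreeMonoid.toList (f i)) := by
  rw [prodFin, toList_listProd, List.flatMap_map]

lemma toList_wWord (n : ℕ) (π τ : Equiv.Perm (Fin n)) :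
    FreeMonoid.toList (wWord n π τ) = LW n π τ := by
  rw [wWord, LW]
  simp only [FreeMonoid.toList_mul, toList_prodRange, toList_prodFin, xL, zV, tV,
    FreeMonoid.toList_of]
  simp [LA, LB, LC, zc, tc, List.append_assoc]

lemma toList_wWord' (n : ℕ) (π τ : Equiv.Perm (Fin n)) :
    FreeMonoid.toList (wWord' n π τ) = LV n π τ := by
  rw [wWord', LV]
  simp only [FreeMonoid.toList_mul, toList_prodRange, toList_prodFin, xL, zV, tV,
    FreeMonoid.toList_of]
  simp [LA, LB, LC, zc, tc, List.append_assoc]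

/-! ### Parity chains -/

/-- adjacent letters have different parity -/
def RelP (a b : ℕ) : Prop := a % 2 ≠ b % 2

lemma chain'_flatMap_pairs {α : Type*} (l : List α) (f g : α → ℕ) (u v : ℕ) (huv : u ≠ v)
    (hf : ∀ i ∈ l, (f i) % 2 = u) (hg : ∀ i ∈ l, (g i) % 2 = v) :
    List.Chain' RelP (l.flatMap fun i => [f i, g i]) := by
  induction l with
  | nil => exact List.isChain_nil
  | cons i l ih =>
    rw [List.flatMap_cons]
    apply List.isChain_append.mpr
    refine ⟨?_, ih (fun j hj => hf j (by simp [hj])) (fun j hj => hg j (by simp [hj])), ?_⟩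
    · refine List.isChain_cons_cons.mpr ⟨?_, List.isChain_singleton _⟩
      show (f i) % 2 ≠ (g i) % 2
      rw [hf i (by simp), hg i (by simp)]
      exact huv
    · intro a ha b hb
      simp only [List.getLast?_cons_cons, List.getLast?_singleton, Option.mem_def,
        Option.some.injEq] at ha
      subst ha
      cases l with
      | nil => simp at hb
      | cons j l' =>
        rw [List.flatMap_cons] at hb
        simp only [List.cons_append, List.head?_cons, Option.mem_def, Option.some.injEq] at hb
        subst hb
        show (g i) % 2 ≠ (f j) % 2
        rw [hg i (by simp), hf j (by simp)]
        exact Ne.symm huv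

lemma chainA {n : ℕ} : List.Chain' RelP (LA n) := by
  apply chain'_flatMap_pairs _ _ _ 0 1 (by omega)
  · intro i _; simp only [zc]; omega
  · intro i _; simp only [tc]; omega

lemma chainC {n : ℕ} : List.Chain' RelP (LC n) := by
  apply chain'_flatMap_pairs _ _ _ 1 0 (by omega)
  · intro i _; simp only [tc]; omega
  · intro i _; simp only [zc]; omega

/-! ### Matching blocks against pairs -/

lemma len_flatMap_pairs {α : Type*} (l : List α) (p q : α → ℕ) :
    (l.flatMap fun i => [p i, q i]).length = 2 * l.length := by
  induction l with
  | nil => simp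
  | cons i l ih => simp [List.flatMap_cons, ih]; omega

lemma pairs_len_le {α : Type*} (l : List α) (F G : α → List ℕ)
    (h : ∀ i ∈ l, (F i).length ≤ 1 ∧ (G i).length ≤ 1) :
    (l.flatMap fun i => F i ++ G i).length ≤ 2 * l.length := by
  induction l with
  | nil => simp
  | cons i l ih =>
    rw [List.flatMap_cons]
    have h1 := h i (by simp)
    have h2 := ih (fun j hj => h j (by simp [hj]))
    simp only [List.length_append, List.length_cons]
    omega

lemma flatMap_congr' {α : Type*} {l : List α} {f g : α → List ℕ}
    (h : ∀ i ∈ l, f i = g i) : l.flatMap f = l.flatMap g := by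
  induction l with
  | nil => simp
  | cons i l ih =>
    rw [List.flatMap_cons, List.flatMap_cons, h i (by simp),
      ih (fun j hj => h j (by simp [hj]))]

lemma blocks_match {α : Type*} (l : List α) (F G : α → List ℕ) (p q : α → ℕ)
    (heq : (l.flatMap fun i => F i ++ G i) = (l.flatMap fun i => [p i, q i]))
    (hle : ∀ i ∈ l, (F i).length ≤ 1 ∧ (G i).length ≤ 1) :
    ∀ i ∈ l, F i = [p i] ∧ G i = [q i] := by
  induction l with
  | nil => simp
  | cons i l ih =>
    rw [List.flatMap_cons, List.flatMap_cons] at heq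
    have hlen := congrArg List.length heq
    simp only [List.length_append, List.length_cons, List.length_nil,
      len_flatMap_pairs] at hlen
    have hRle : (l.flatMap fun i => F i ++ G i).length ≤ 2 * l.length :=
      pairs_len_le _ _ _ (fun j hj => hle j (by simp [hj]))
    have h1 := hle i (by simp)
    have hF : (F i).length = 1 := by omega
    have hG : (G i).length = 1 := by omega
    obtain ⟨a, ha⟩ := List.length_eq_one_iff.mp hF
    obtain ⟨b, hb⟩ := List.length_eq_one_iff.mp hG
    rw [ha, hb] at heq
    simp only [List.cons_append, List.nil_append, List.cons.injEq] at heq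
    obtain ⟨rfl, rfl, hR⟩ := heq
    intro j hj
    rcases List.mem_cons.mp hj with rfl | hj'
    · exact ⟨ha, hb⟩
    · exact ih hR (fun k hk => hle k (by simp [hk])) j hj'

lemma flatMap_pairs_bind {α : Type*} (l : List α) (a b : α → ℕ) (g : ℕ → List ℕ) :
    ((l.flatMap fun i => [a i, b i]).flatMap g) = l.flatMap (fun i => g (a i) ++ g (b i)) := by
  induction l with
  | nil => simp
  | cons i l ih =>
    simp [List.flatMap_cons, List.flatMap_append, ih]
/-! ### t-free infixes live in the middle -/

lemma mem_of_suffix_concat {s l : List ℕ} {a : ℕ} (h : s <:+ l ++ [a]) (hs : s ≠ []) : a ∈ s := by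
  obtain ⟨p, hp⟩ := h
  rcases List.eq_nil_or_concat s with rfl | ⟨s', b, rfl⟩
  · exact absurd rfl hs
  · rw [List.concat_eq_append, ← List.append_assoc] at hp
    have hlen : (p ++ s').length = l.length := by
      have := congrArg List.length hp
      simp only [List.length_append, List.length_cons, List.length_nil] at this
      simp only [List.length_append]
      omega
    have := (List.append_inj hp hlen).2
    simp only [List.cons.injEq] at this
    simp [this.1]

lemma mem_of_prefix_cons {p l : List ℕ} {a : ℕ} (h : p <+: a :: l) (hp : p ≠ []) : a ∈ p := by
  obtain ⟨r, hr⟩ := h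
  cases p with
  | nil => exact absurd rfl hp
  | cons b p' =>
    simp only [List.cons_append, List.cons.injEq] at hr
    simp [hr.1]

lemma LA_succ (m : ℕ) : LA (m+1) = LA m ++ [zc m, tc m] := by
  rw [LA, LA, List.range_succ, List.flatMap_append]
  simp

lemma LA_concat (m : ℕ) : LA (m+1) = (LA m ++ [zc m]) ++ [tc m] := by
  rw [LA_succ]
  simp

def LCg (k n : ℕ) : List ℕ := (List.range n).flatMap fun i => [tc (k + i), zc (k + i)]

lemma LC_eq_LCg (n : ℕ) : LC n = LCg n n := rfl

lemma LCg_succ (k m : ℕ) : LCg k (m+1) = LCg k m ++ [tc (k+m), zc (k+m)] := by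
  rw [LCg, LCg, List.range_succ, List.flatMap_append]
  simp

lemma infix_LA_t {n : ℕ} {u : List ℕ} (h : u <:+: LA n) (hlen : 2 ≤ u.length) :
    ∃ j, j < n ∧ tc j ∈ u := by
  induction n with
  | zero =>
    have h0 : u = [] := List.sublist_nil.mp h.sublist
    rw [h0] at hlen
    simp at hlen
  | succ m ih =>
    rw [LA_succ] at h
    rcases infix_append_split h with h1 | h1 | ⟨s, p, rfl, hs, hp, hsne, hpne⟩
    · obtain ⟨j, hj, hmem⟩ := ih h1
      exact ⟨j, by omega, hmem⟩
    · have h2 : u.length = 2 := by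
        have := h1.length_le
        simp at this
        omega
      have := h1.eq_of_length (by simpa using h2)
      exact ⟨m, by omega, by simp [this]⟩
    · by_cases htm : tc m ∈ p
      · exact ⟨m, by omega, List.mem_append_right s htm⟩
      · have hp1 : p = [zc m] := by
          obtain ⟨r, hr⟩ := hp
          cases p with
          | nil => exact absurd rfl hpne
          | cons c p' =>
            simp only [List.cons_append, List.cons.injEq] at hr
            cases p' with
            | nil => rw [hr.1]
            | cons d p'' =>
              simp only [List.cons_append, List.cons.injEq] at hr
              exact absurd (by simp [hr.2.1] : tc m ∈ c :: d :: p'') htm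
        cases m with
        | zero =>
          rw [show LA 0 = [] from rfl] at hs
          exact absurd (List.suffix_nil.mp hs) hsne
        | succ m' =>
          rw [LA_concat] at hs
          have := mem_of_suffix_concat hs hsne
          exact ⟨m', by omega, List.mem_append_left p this⟩

lemma infix_LCg_t {k n : ℕ} {u : List ℕ} (h : u <:+: LCg k n) (hlen : 2 ≤ u.length) :
    ∃ j, j < n ∧ tc (k + j) ∈ u := by
  induction n with
  | zero =>
    have h0 : u = [] := List.sublist_nil.mp h.sublist
    rw [h0] at hlen
    simp at hlen
  | succ m ih =>
    rw [LCg_succ] at h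
    rcases infix_append_split h with h1 | h1 | ⟨s, p, rfl, hs, hp, hsne, hpne⟩
    · obtain ⟨j, hj, hmem⟩ := ih h1
      exact ⟨j, by omega, hmem⟩
    · have h2 : u.length = 2 := by
        have := h1.length_le
        simp at this
        omega
      have := h1.eq_of_length (by simpa using h2)
      exact ⟨m, by omega, by simp [this]⟩
    · have := mem_of_prefix_cons hp hpne
      exact ⟨m, by omega, List.mem_append_right s this⟩

lemma LC_head {n : ℕ} (hn : 1 ≤ n) : ∃ rest, LC n = tc n :: rest := by
  obtain ⟨m, rfl⟩ : ∃ m, n = m + 1 := ⟨n - 1, by omega⟩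
  rw [LC, List.range_succ_eq_map, List.flatMap_cons]
  refine ⟨zc (m+1) :: ((List.map Nat.succ (List.range m)).flatMap
    fun i => [tc (m+1+i), zc (m+1+i)]), ?_⟩
  simp

lemma infix_mid {n : ℕ} (hn : 1 ≤ n) {ξ η : Equiv.Perm (Fin n)} {u : List ℕ}
    (hu : u <:+: LW n ξ η) (hlen : 2 ≤ u.length) (hfree : ∀ j, tc j ∉ u) :
    u <:+: 0 :: (LB n ξ η ++ [0]) := by
  have hW : LW n ξ η = LA n ++ ((0 :: (LB n ξ η ++ [0])) ++ LC n) := by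
    simp [LW]
  rw [hW] at hu
  rcases infix_append_split hu with h1 | h1 | ⟨s, p, rfl, hs, hp, hsne, hpne⟩
  · obtain ⟨j, _, hmem⟩ := infix_LA_t h1 hlen
    exact absurd hmem (hfree j)
  · rcases infix_append_split h1 with h2 | h2 | ⟨s, p, rfl, hs, hp, hsne, hpne⟩
    · exact h2
    · rw [LC_eq_LCg] at h2
      obtain ⟨j, _, hmem⟩ := infix_LCg_t h2 hlen
      exact absurd hmem (hfree (n+j))
    · obtain ⟨rest, hrest⟩ := LC_head hn
      rw [hrest] at hp
      have := mem_of_prefix_cons hp hpne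
      exact absurd (List.mem_append_right s this) (hfree n)
  · obtain ⟨m, rfl⟩ : ∃ m, n = m + 1 := ⟨n - 1, by omega⟩
    rw [LA_concat] at hs
    have := mem_of_suffix_concat hs hsne
    exact absurd (List.mem_append_left p this) (hfree m)
/-! ### The key argument -/

lemma LA_head {n : ℕ} (hn : 1 ≤ n) : ∃ rest, LA n = zc 0 :: rest ∧ zc 0 ∉ rest := by
  obtain ⟨m, rfl⟩ : ∃ m, n = m + 1 := ⟨n - 1, by omega⟩
  have hhead : LA (m+1) = zc 0 :: (tc 0 :: ((List.map Nat.succ (List.range m)).flatMap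
      fun i => [zc i, tc i])) := by
    rw [LA, List.range_succ_eq_map, List.flatMap_cons]
    simp [LA]
  refine ⟨_, hhead, ?_⟩
  intro hmem
  have hc := @czA 0 (m+1)
  rw [if_pos (by omega), hhead, List.count_cons_self] at hc
  have := List.count_pos_iff.mpr hmem
  omega

lemma LC_last {n : ℕ} (hn : 1 ≤ n) :
    ∃ init, LC n = init ++ [zc (2*n-1)] ∧ zc (2*n-1) ∉ init := by
  obtain ⟨m, rfl⟩ : ∃ m, n = m + 1 := ⟨n - 1, by omega⟩
  have h2 : 2*(m+1)-1 = m+1+m := by omega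
  have hlast : LC (m+1) = ((LCg (m+1) m) ++ [tc (m+1+m)]) ++ [zc (m+1+m)] := by
    rw [LC_eq_LCg, LCg_succ]
    simp
  refine ⟨LCg (m+1) m ++ [tc (m+1+m)], by rw [hlast, h2], ?_⟩
  intro hmem
  rw [h2] at hmem
  have hc := @czC (m+1+m) (m+1)
  rw [if_pos (by omega)] at hc
  rw [hlast, List.count_append] at hc
  have hsing : List.count (zc (m+1+m)) [zc (m+1+m)] = 1 := by simp
  have hpos := List.count_pos_iff.mpr hmem
  omega

lemma gx_key {n : ℕ} (hn : 1 ≤ n) {ξ η : Equiv.Perm (Fin n)} (g0 mid : List ℕ)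
    (hg0 : g0 ≠ [])
    (hinf : g0 ++ mid ++ g0 <:+: LW n ξ η)
    (hdouble : ∀ a ∈ g0 ++ mid ++ g0, 2 ≤ (LW n ξ η).count a) :
    g0 = [0] ∧ mid.count 0 = 0 := by
  have hfree : ∀ j, tc j ∉ (g0 ++ mid ++ g0) := by
    intro j hj
    have h1 := hdouble _ hj
    have h2 := @ctW j n ξ η
    omega
  have hg0len : 1 ≤ g0.length := List.length_pos_iff.mpr hg0
  have hlen : 2 ≤ (g0 ++ mid ++ g0).length := by
    simp only [List.length_append]
    omega
  have hmidinf := infix_mid hn hinf hlen hfree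
  have hcnt : ∀ a, (g0 ++ mid ++ g0).count a ≤ (0 :: (LB n ξ η ++ [0])).count a :=
    fun a => hmidinf.sublist.count_le a
  have hcM : (0 :: (LB n ξ η ++ [0])).count 0 = 2 := by
    simp [List.count_cons, List.count_append, @cxB n ξ η]
  have hg0x : ∀ a ∈ g0, a = 0 := by
    intro a ha
    by_contra hne
    have h1 : 1 ≤ g0.count a := List.count_pos_iff.mpr ha
    have h2 := hcnt a
    have h3 : (0 :: (LB n ξ η ++ [0])).count a = (LB n ξ η).count a := by
      simp [List.count_cons, List.count_append, List.count_singleton', hne, Ne.symm hne]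
    have h4 := @cB_le_one n ξ η a
    rw [h3] at h2
    simp only [List.count_append] at h2
    omega
  have hmem0 : (0:ℕ) ∈ g0 := by
    cases g0 with
    | nil => exact absurd rfl hg0
    | cons b l => rw [hg0x b (by simp)]; simp
  have h1 : 1 ≤ g0.count 0 := List.count_pos_iff.mpr hmem0
  have h2 := hcnt 0
  rw [hcM] at h2
  simp only [List.count_append] at h2
  have hc01 : g0.count 0 = 1 := by omega
  have hmid : mid.count 0 = 0 := by omega
  have hlen1 : g0.length = 1 := by
    have := List.count_eq_length.mpr (fun b hb => ((hg0x b hb).symm : (0:ℕ) = b))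
    omega
  obtain ⟨a, rfl⟩ := List.length_eq_one_iff.mp hlen1
  rw [hg0x a (by simp)]
  exact ⟨rfl, hmid⟩

lemma not_infix_u {n : ℕ} (hn : 1 ≤ n) {π τ ξ η : Equiv.Perm (Fin n)}
    (hne2 : ¬(π = ξ ∧ τ = η)) (g : ℕ → List ℕ) (hgx : g 0 ≠ []) :
    ¬ ((LW n π τ).flatMap g <:+: LW n ξ η) := by
  intro hu
  have hdecomp : (LW n π τ).flatMap g =
      ((LA n).flatMap g) ++ (g 0 ++ (LB n π τ).flatMap g ++ g 0) ++ ((LC n).flatMap g) := by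
    simp [LW, List.flatMap_append, List.flatMap_cons, List.append_assoc]
  have hSUle : ∀ a, ((LW n π τ).flatMap g).count a ≤ (LW n ξ η).count a :=
    fun a => hu.sublist.count_le a
  have hdgen : ∀ c, (LW n π τ).count c = 2 → ∀ a ∈ g c, 2 ≤ (LW n ξ η).count a := by
    intro c hc a ha
    have h1 := le_count_bind (LW n π τ) g c a
    rw [hc] at h1
    have h2 : 1 ≤ (g c).count a := List.count_pos_iff.mpr ha
    have h3 := hSUle a
    omega
  have hdouble : ∀ a ∈ g 0 ++ (LB n π τ).flatMap g ++ g 0, 2 ≤ (LW n ξ η).count a := by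
    intro a ha
    rcases List.mem_append.mp ha with ha' | ha'
    · rcases List.mem_append.mp ha' with ha'' | ha''
      · exact hdgen 0 (@cxW n π τ) a ha''
      · obtain ⟨c, hcB, hac⟩ := List.mem_flatMap.mp ha''
        obtain ⟨k, hk, rfl⟩ := memLB hcB
        exact hdgen (zc k) (czW hk) a hac
    · exact hdgen 0 (@cxW n π τ) a ha'
  have hinf : g 0 ++ (LB n π τ).flatMap g ++ g 0 <:+: LW n ξ η :=
    List.IsInfix.trans
      (show g 0 ++ (LB n π τ).flatMap g ++ g 0 <:+: (LW n π τ).flatMap g from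
        ⟨(LA n).flatMap g, (LC n).flatMap g, hdecomp.symm⟩) hu
  obtain ⟨hg0, hmid0⟩ := gx_key hn (g 0) ((LB n π τ).flatMap g) hgx hinf hdouble
  -- alignment
  obtain ⟨p, q, hpq⟩ := hu
  rw [hdecomp, hg0] at hpq
  have hcnt0 := congrArg (List.count 0) hpq
  rw [@cxW n ξ η] at hcnt0
  simp only [List.count_append, List.count_cons_self, List.count_nil] at hcnt0
  have hp0 : p.count 0 = 0 := by omega
  have hq0 : q.count 0 = 0 := by omega
  have hsA0 : ((LA n).flatMap g).count 0 = 0 := by omega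
  have hsC0 : ((LC n).flatMap g).count 0 = 0 := by omega
  have hpq2 : (p ++ (LA n).flatMap g) ++
      0 :: ((LB n π τ).flatMap g ++ 0 :: ((LC n).flatMap g ++ q)) =
      LA n ++ 0 :: (LB n ξ η ++ 0 :: LC n) := by
    rw [show LA n ++ 0 :: (LB n ξ η ++ 0 :: LC n) = LW n ξ η from rfl, ← hpq]
    simp [List.append_assoc]
  have hsplit1 := eq_append_cons_split hpq2
    (by
      intro hmem
      rcases List.mem_append.mp hmem with h | h
      · exact absurd (List.count_pos_iff.mpr h) (by omega)
      · exact absurd (List.count_pos_iff.mpr h) (by omega))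
    (by
      intro hmem
      exact absurd (List.count_pos_iff.mpr hmem) (by have := @cxA n; omega))
  obtain ⟨hA', hrest⟩ := hsplit1
  have hsplit2 := eq_append_cons_split hrest
    (by
      intro hmem
      exact absurd (List.count_pos_iff.mpr hmem) (by omega))
    (by
      intro hmem
      exact absurd (List.count_pos_iff.mpr hmem) (by have := @cxB n ξ η; omega))
  obtain ⟨hZ, hCq⟩ := hsplit2
  -- homes for the doubled z-letters
  have home : ∀ j, j < 2*n → ∃ k, k < 2*n ∧ zc j ∈ g (zc k) ∧ (g (zc k)).count (zc j) = 1 ∧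
      (∀ c, c ∈ LW n π τ → c ≠ zc k → (g c).count (zc j) = 0) := by
    intro j hj
    have hmemB : zc j ∈ LB n ξ η := by
      apply List.count_pos_iff.mp
      by_cases hjn : j < n
      · rw [czB_lo hjn ξ η]; omega
      · rw [czB_hi (by omega) hj ξ η]; omega
    rw [← hZ] at hmemB
    obtain ⟨c, hcB, hmem⟩ := List.mem_flatMap.mp hmemB
    obtain ⟨k, hk, rfl⟩ := memLB hcB
    have h1 := le_count_bind (LW n π τ) g (zc k) (zc j)
    rw [czW hk] at h1
    have h2 := hSUle (zc j)
    rw [czW hj] at h2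
    have h3 : 1 ≤ (g (zc k)).count (zc j) := List.count_pos_iff.mpr hmem
    have hcnt1 : (g (zc k)).count (zc j) = 1 := by omega
    refine ⟨k, hk, hmem, hcnt1, ?_⟩
    intro c hc hnec
    have h4 := le_count_bind₂ (LW n π τ) g (show zc k ≠ c from fun hh => hnec hh.symm) (zc j)
    rw [czW hk, hcnt1] at h4
    have h5 : 1 ≤ (LW n π τ).count c := List.count_pos_iff.mpr hc
    have h6 : (LW n π τ).count c * (g c).count (zc j) = 0 := by omega
    rcases Nat.mul_eq_zero.mp h6 with h7 | h7
    · omega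
    · exact h7
  -- sA = LA n
  have hsA : (LA n).flatMap g = LA n := by
    obtain ⟨k, hk, hmem, hcnt1, huniq⟩ := home 0 (by omega)
    have hklt : k < n := by
      by_contra hge
      have hcC : (LC n).count (zc k) = 1 := by rw [czC, if_pos ⟨by omega, hk⟩]
      have h1 := le_count_bind (LC n) g (zc k) (zc 0)
      rw [hcC, one_mul, hcnt1] at h1
      have hmemC : zc 0 ∈ LC n :=
        List.IsPrefix.subset (show (LC n).flatMap g <+: LC n from ⟨q, hCq⟩)
          (List.count_pos_iff.mp (by omega))
      obtain ⟨k', hk1', hk2', hform⟩ := memLC hmemC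
      rcases hform with hform | hform
      · exact zc_ne_tc hform
      · rw [zc_inj] at hform
        omega
    have hcA : (LA n).count (zc k) = 1 := by rw [czA, if_pos hklt]
    have h1 := le_count_bind (LA n) g (zc k) (zc 0)
    rw [hcA, one_mul, hcnt1] at h1
    have hmemA : zc 0 ∈ (LA n).flatMap g := List.count_pos_iff.mp (by omega)
    obtain ⟨rest, hhead, hnotail⟩ := LA_head hn
    have hres : (LA n).flatMap g = zc 0 :: rest :=
      suffix_eq_of_head (by rw [← hhead]; exact ⟨p, hA'⟩) hmemA hnotail
    rw [hres, ← hhead]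
  -- sC = LC n
  have hsC : (LC n).flatMap g = LC n := by
    obtain ⟨k, hk, hmem, hcnt1, huniq⟩ := home (2*n-1) (by omega)
    have hkge : n ≤ k := by
      by_contra hlt
      have hcA : (LA n).count (zc k) = 1 := by rw [czA, if_pos (by omega)]
      have h1 := le_count_bind (LA n) g (zc k) (zc (2*n-1))
      rw [hcA, one_mul, hcnt1] at h1
      have hmemA : zc (2*n-1) ∈ LA n := by
        rw [← hsA]
        exact List.count_pos_iff.mp (by omega)
      obtain ⟨j, hj, hform⟩ := memLA hmemA
      rcases hform with hform | hform
      · rw [zc_inj] at hform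
        omega
      · exact zc_ne_tc hform
    have hcC : (LC n).count (zc k) = 1 := by rw [czC, if_pos ⟨hkge, hk⟩]
    have h1 := le_count_bind (LC n) g (zc k) (zc (2*n-1))
    rw [hcC, one_mul, hcnt1] at h1
    have hmemC : zc (2*n-1) ∈ (LC n).flatMap g := List.count_pos_iff.mp (by omega)
    obtain ⟨init, hlast, hnoinit⟩ := LC_last hn
    have hres : (LC n).flatMap g = init ++ [zc (2*n-1)] :=
      prefix_eq_of_last (by rw [← hlast]; exact ⟨q, hCq⟩) hmemC hnoinit
    rw [hres, ← hlast]
  -- typing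
  have hzEven : ∀ k, k < 2*n → ∀ a ∈ g (zc k), a % 2 = 0 := by
    intro k hk a ha
    have h1 := hdgen (zc k) (czW hk) a ha
    rcases doubles h1 with rfl | ⟨j, _, rfl⟩
    · rfl
    · simp only [zc]; omega
  have htcU : ∀ i, i < 2*n → tc i ∈ LW n π τ := by
    intro i hi
    apply List.count_pos_iff.mp
    simp only [LW, List.count_append, List.count_cons]
    have h1 := @ctA i n
    have h2 := @ctB i n π τ
    have h3 := @ctC i n
    by_cases hin : i < n
    · rw [if_pos hin] at h1; omega
    · rw [if_pos ⟨by omega, hi⟩] at h3; omega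
  have htOddA : ∀ i, i < n → ∀ a ∈ g (tc i), a % 2 = 1 := by
    intro i hi a ha
    have hcA : (LA n).count (tc i) = 1 := by rw [ctA, if_pos hi]
    have h1 := le_count_bind (LA n) g (tc i) a
    rw [hcA, one_mul] at h1
    have h2 : 1 ≤ (g (tc i)).count a := List.count_pos_iff.mpr ha
    have hmemA : a ∈ LA n := by
      rw [← hsA]
      exact List.count_pos_iff.mp (by omega)
    obtain ⟨j, hj, hform⟩ := memLA hmemA
    rcases hform with rfl | rfl
    · exfalso
      obtain ⟨k, hk, hmem', hcnt1, huniq⟩ := home j (by omega)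
      have := huniq (tc i) (htcU i (by omega)) (fun hh => tc_ne_zc hh)
      omega
    · simp only [tc]; omega
  have htOddC : ∀ i, i < n → ∀ a ∈ g (tc (n+i)), a % 2 = 1 := by
    intro i hi a ha
    have hcC : (LC n).count (tc (n+i)) = 1 := by rw [ctC, if_pos ⟨by omega, by omega⟩]
    have h1 := le_count_bind (LC n) g (tc (n+i)) a
    rw [hcC, one_mul] at h1
    have h2 : 1 ≤ (g (tc (n+i))).count a := List.count_pos_iff.mpr ha
    have hmemC : a ∈ LC n := by
      rw [← hsC]
      exact List.count_pos_iff.mp (by omega)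
    obtain ⟨j, hj1, hj2, hform⟩ := memLC hmemC
    rcases hform with rfl | rfl
    · simp only [tc]; omega
    · exfalso
      obtain ⟨k, hk, hmem', hcnt1, huniq⟩ := home j (by omega)
      have := huniq (tc (n+i)) (htcU (n+i) (by omega)) (fun hh => tc_ne_zc hh)
      omega
  -- block equations
  have e1 : (List.range n).flatMap (fun i => g (zc i) ++ g (tc i)) =
      (List.range n).flatMap (fun i => [zc i, tc i]) := by
    rw [← flatMap_pairs_bind]
    exact hsA
  have e3 : (List.range n).flatMap (fun i => g (tc (n+i)) ++ g (zc (n+i))) =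
      (List.range n).flatMap (fun i => [tc (n+i), zc (n+i)]) := by
    rw [← flatMap_pairs_bind]
    exact hsC
  have hblocksA : ∀ i ∈ List.range n, (g (zc i)).length ≤ 1 ∧ (g (tc i)).length ≤ 1 := by
    intro i hi
    have hi' := List.mem_range.mp hi
    have hinf1 : g (zc i) ++ g (tc i) <:+: LA n := by
      have := infix_bind_of_mem hi (fun i => g (zc i) ++ g (tc i))
      rw [e1] at this
      exact this
    constructor
    · apply length_le_one_of_chain'
        (List.IsInfix.trans (show g (zc i) <:+: g (zc i) ++ g (tc i) from
          ⟨[], g (tc i), by simp⟩) hinf1) chainA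
      intro a b ha hb hR
      exact hR (by rw [hzEven i (by omega) a ha, hzEven i (by omega) b hb])
    · apply length_le_one_of_chain'
        (List.IsInfix.trans (show g (tc i) <:+: g (zc i) ++ g (tc i) from
          ⟨g (zc i), [], by simp⟩) hinf1) chainA
      intro a b ha hb hR
      exact hR (by rw [htOddA i hi' a ha, htOddA i hi' b hb])
  have hblocksC : ∀ i ∈ List.range n, (g (tc (n+i))).length ≤ 1 ∧ (g (zc (n+i))).length ≤ 1 := by
    intro i hi
    have hi' := List.mem_range.mp hi
    have hinf1 : g (tc (n+i)) ++ g (zc (n+i)) <:+: LC n := by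
      have := infix_bind_of_mem hi (fun i => g (tc (n+i)) ++ g (zc (n+i)))
      rw [e3] at this
      exact this
    constructor
    · apply length_le_one_of_chain'
        (List.IsInfix.trans (show g (tc (n+i)) <:+: g (tc (n+i)) ++ g (zc (n+i)) from
          ⟨[], g (zc (n+i)), by simp⟩) hinf1) chainC
      intro a b ha hb hR
      exact hR (by rw [htOddC i hi' a ha, htOddC i hi' b hb])
    · apply length_le_one_of_chain'
        (List.IsInfix.trans (show g (zc (n+i)) <:+: g (tc (n+i)) ++ g (zc (n+i)) from
          ⟨g (tc (n+i)), [], by simp⟩) hinf1) chainC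
      intro a b ha hb hR
      exact hR (by rw [hzEven (n+i) (by omega) a ha, hzEven (n+i) (by omega) b hb])
  have hmatchA := blocks_match (List.range n) (fun i => g (zc i)) (fun i => g (tc i))
    zc tc e1 hblocksA
  have hmatchC := blocks_match (List.range n) (fun i => g (tc (n+i))) (fun i => g (zc (n+i)))
    (fun i => tc (n+i)) (fun i => zc (n+i)) e3 hblocksC
  -- the middle equation
  have hZ' : (List.finRange n).flatMap (fun i => g (zc (π i)) ++ g (zc (n + (τ i : ℕ)))) =
      (List.finRange n).flatMap (fun i => [zc (ξ i), zc (n + (η i : ℕ))]) := by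
    rw [← flatMap_pairs_bind]
    exact hZ
  have hsub : ∀ i ∈ List.finRange n,
      g (zc (π i)) ++ g (zc (n + (τ i : ℕ))) = [zc (π i)] ++ [zc (n + (τ i : ℕ))] := by
    intro i _
    have h1 : g (zc (π i)) = [zc (π i)] :=
      (hmatchA ((π i : ℕ)) (List.mem_range.mpr (π i).isLt)).1
    have h2 : g (zc (n + (τ i : ℕ))) = [zc (n + (τ i : ℕ))] :=
      (hmatchC ((τ i : ℕ)) (List.mem_range.mpr (τ i).isLt)).2
    rw [h1, h2]
  have e2' : (List.finRange n).flatMap (fun i => [zc (π i)] ++ [zc (n + (τ i : ℕ))]) =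
      (List.finRange n).flatMap (fun i => [zc (ξ i), zc (n + (η i : ℕ))]) :=
    (flatMap_congr' hsub).symm.trans hZ'
  have hfinal := blocks_match (List.finRange n) (fun i => [zc (π i)])
    (fun i => [zc (n + (τ i : ℕ))]) (fun i => zc (ξ i)) (fun i => zc (n + (η i : ℕ)))
    e2' (fun i _ => ⟨by simp, by simp⟩)
  apply hne2
  constructor
  · apply Equiv.ext
    intro i
    have h1 := (hfinal i (List.mem_finRange i)).1
    simp only [List.cons.injEq, and_true] at h1
    rw [zc_inj] at h1
    exact Fin.ext h1
  · apply Equiv.ext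
    intro i
    have h2 := (hfinal i (List.mem_finRange i)).2
    simp only [List.cons.injEq, and_true] at h2
    rw [zc_inj] at h2
    exact Fin.ext (by omega)

lemma not_infix_v {n : ℕ} (hn : 1 ≤ n) {π τ ξ η : Equiv.Perm (Fin n)}
    (g : ℕ → List ℕ) (hgx : g 0 ≠ []) :
    ¬ ((LV n π τ).flatMap g <:+: LW n ξ η) := by
  intro hv
  have hdecomp : (LV n π τ).flatMap g =
      ((LA n).flatMap g) ++ (g 0 ++ [] ++ g 0) ++
        ((LB n π τ).flatMap g ++ (LC n).flatMap g) := by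
    simp [LV, List.flatMap_append, List.flatMap_cons, List.append_assoc]
  have hSVle : ∀ a, ((LV n π τ).flatMap g).count a ≤ (LW n ξ η).count a :=
    fun a => hv.sublist.count_le a
  have hcxV : (LV n π τ).count 0 = 2 := by
    simp only [LV, List.count_append, List.count_cons_self, @cxA n, @cxB n π τ, @cxC n]
  have hdouble : ∀ a ∈ g 0 ++ [] ++ g 0, 2 ≤ (LW n ξ η).count a := by
    intro a ha
    have ha' : a ∈ g 0 := by
      rcases List.mem_append.mp ha with ha' | ha'
      · simpa using ha'
      · exact ha'
    have h1 := le_count_bind (LV n π τ) g 0 a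
    rw [hcxV] at h1
    have h2 : 1 ≤ (g 0).count a := List.count_pos_iff.mpr ha'
    have h3 := hSVle a
    omega
  have hinf : g 0 ++ [] ++ g 0 <:+: LW n ξ η :=
    List.IsInfix.trans
      (show g 0 ++ [] ++ g 0 <:+: (LV n π τ).flatMap g from
        ⟨(LA n).flatMap g, (LB n π τ).flatMap g ++ (LC n).flatMap g, hdecomp.symm⟩) hv
  obtain ⟨hg0, _⟩ := gx_key hn (g 0) [] hgx hinf hdouble
  -- so [0,0] is an infix of the middle
  have hfree : ∀ j, tc j ∉ (g 0 ++ [] ++ g 0) := by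
    intro j hj
    have h1 := hdouble _ hj
    have h2 := @ctW j n ξ η
    omega
  have hmid := infix_mid hn hinf (by rw [hg0]; simp) hfree
  rw [hg0] at hmid
  have hmid2 : [0, 0] <:+: 0 :: (LB n ξ η ++ [0]) := by
    simpa using hmid
  obtain ⟨p, q, hpq⟩ := hmid2
  have hcnt0 := congrArg (List.count 0) hpq
  simp only [List.count_append, List.count_cons_self, List.count_cons, List.count_nil,
    List.count_singleton, @cxB n ξ η] at hcnt0
  have hp0 : p.count 0 = 0 := by omega
  have hpnil : p = [] := by
    cases p with
    | nil => rfl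
    | cons c p' =>
      simp only [List.cons_append, List.cons.injEq] at hpq
      rw [hpq.1] at hp0
      rw [List.count_cons_self] at hp0
      omega
  rw [hpnil, List.nil_append] at hpq
  simp only [List.cons_append, List.nil_append, List.cons.injEq] at hpq
  have hLB : (0 : ℕ) ∈ LB n ξ η := by
    have hlen : (LB n ξ η).length = 2*n := len_LB
    cases hB : LB n ξ η with
    | nil => rw [hB] at hlen; simp at hlen; omega
    | cons b B' =>
      rw [hB] at hpq
      simp only [List.cons_append, List.cons.injEq] at hpq
      rw [← hpq.2.1]
      simp
  have := @cxB n ξ η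
  have := List.count_pos_iff.mpr hLB
  omega
/-! ### From monoid homomorphisms to substitutions on lists -/

lemma hom_toList (σ : FM →* FM) : ∀ (l : List ℕ),
    FreeMonoid.toList (σ (FreeMonoid.ofList l)) =
      l.flatMap (fun c => FreeMonoid.toList (σ (FreeMonoid.of c)))
  | [] => by simp
  | a :: l => by
    rw [List.flatMap_cons, ← hom_toList σ l, ← FreeMonoid.toList_mul, ← map_mul,
      ← FreeMonoid.ofList_cons]

lemma toList_hom_eq (σ : FM →* FM) (m : FM) :
    FreeMonoid.toList (σ m) =
      (FreeMonoid.toList m).flatMap (fun c => FreeMonoid.toList (σ (FreeMonoid.of c))) := by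
  conv_lhs => rw [← FreeMonoid.ofList_toList m]
  exact hom_toList σ _

lemma isFactor_iff_infix {u w : FM} :
    IsFactor u w ↔ FreeMonoid.toList u <:+: FreeMonoid.toList w := by
  constructor
  · rintro ⟨p, q, rfl⟩
    exact ⟨FreeMonoid.toList p, FreeMonoid.toList q, by simp [FreeMonoid.toList_mul]⟩
  · rintro ⟨s, t, h⟩
    refine ⟨FreeMonoid.ofList s, FreeMonoid.ofList t, ?_⟩
    apply FreeMonoid.toList.injective
    simp only [FreeMonoid.toList_mul, FreeMonoid.toList_ofList]
    exact h

end SWaux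

/-- **Lemma (Section 3.3).** If `w_n[π,τ] ≠ w_n[ξ,η]`, then the monoid
`S(w_n[ξ,η])` satisfies the identity `w_n[π,τ] ≈ w_n'[π,τ]`. -/
theorem SW_satisfies_w_identity (n : ℕ) (hn : 1 ≤ n)
    (π τ ξ η : Equiv.Perm (Fin n))
    (hne : wWord n π τ ≠ wWord n ξ η) :
    MSatisfies (SMon (wWord n ξ η)) (wWord n π τ, wWord' n π τ) := by
  intro φ
  classical
  have hsurj : Function.Surjective ((reesCon (wWord n ξ η)).mk') := Con.mk'_surjective
  choose f hf using fun i : ℕ => hsurj (φ (FreeMonoid.of i))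
  let σ : FM →* FM := FreeMonoid.lift f
  have hφ : φ = ((reesCon (wWord n ξ η)).mk').comp σ := by
    apply FreeMonoid.hom_eq
    intro a
    simp only [MonoidHom.comp_apply, σ, FreeMonoid.lift_eval_of]
    exact (hf a).symm
  have key : reesCon (wWord n ξ η) (σ (wWord n π τ)) (σ (wWord' n π τ)) := by
    show σ (wWord n π τ) = σ (wWord' n π τ) ∨
      (¬ IsFactor (σ (wWord n π τ)) (wWord n ξ η) ∧
        ¬ IsFactor (σ (wWord' n π τ)) (wWord n ξ η))
    by_cases hgx : FreeMonoid.toList (σ (FreeMonoid.of 0)) = []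
    · left
      apply FreeMonoid.toList.injective
      rw [SWaux.toList_hom_eq σ, SWaux.toList_hom_eq σ, SWaux.toList_wWord, SWaux.toList_wWord']
      simp [SWaux.LW, SWaux.LV, List.flatMap_append, List.flatMap_cons, hgx]
    · right
      have hne2 : ¬(π = ξ ∧ τ = η) := fun hpair => hne (by rw [hpair.1, hpair.2])
      constructor
      · intro hfac
        rw [SWaux.isFactor_iff_infix, SWaux.toList_hom_eq σ, SWaux.toList_wWord, SWaux.toList_wWord] at hfac
        exact SWaux.not_infix_u hn hne2 _ hgx hfac
      · intro hfac
        rw [SWaux.isFactor_iff_infix, SWaux.toList_hom_eq σ, SWaux.toList_wWord', SWaux.toList_wWord] at hfac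
        exact SWaux.not_infix_v hn _ hgx hfac
  show φ (wWord n π τ) = φ (wWord' n π τ)
  rw [hφ]
  exact (Con.eq _).mpr key
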